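/- If R solves the 1+1 wave equation R_tt = R_xx on [0,∞)×ℝ, and R_b(t,x) = R_0 e^{2t} cosh(2x) with R_0 > 0, and the initial deviation satisfies ‖R(0,·) − R_b(0,·)‖_{C^0} + ‖R_t(0,·) − ∂_t R_b(0,·)‖_{C^0} < 2R_0/3, then R(t,x) > 0 for all t ≥ 0 and all x ∈ ℝ. -/

import Mathlib

open Real

/-- time derivative -/
noncomputable def pt (u : ℝ → ℝ → ℝ) : ℝ → ℝ → ℝ := fun t x => deriv (fun s => u s x) t
/-- space derivative -/
noncomputable def px (u : ℝ → ℝ → ℝ) : ℝ → ℝ → ℝ := fun t x => deriv (fun y => u t y) x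

/-- positivity of `R` for small initial deviation from the
double-cusp background `R_b(t,x) = R₀ e^{2t} cosh (2x)`. -/
theorem statement0 (R : ℝ → ℝ → ℝ) (R₀ : ℝ) (hR₀ : 0 < R₀)
    (Rb : ℝ → ℝ → ℝ)
    (hRb : Rb = fun t x => R₀ * Real.exp (2 * t) * Real.cosh (2 * x))
    (hsmooth : ContDiff ℝ 2 (fun p : ℝ × ℝ => R p.1 p.2))
    (hwave : ∀ t x, pt (pt R) t x = px (px R) t x)
    (A B : ℝ)
    (hA : ∀ x, |R 0 x - Rb 0 x| ≤ A)
    (hB : ∀ x, |pt R 0 x - pt Rb 0 x| ≤ B)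
    (hsmall : A + B < 2 * R₀ / 3) :
    ∀ t x, 0 ≤ t → 0 < R t x := by
  intro t₀ x₀ ht₀
  set F : ℝ × ℝ → ℝ := fun p => R p.1 p.2 with hFdef
  have hF : ContDiff ℝ 2 F := hsmooth
  have hFd : Differentiable ℝ F := hF.differentiable (by norm_num)
  have hF'c : ContDiff ℝ 1 (fderiv ℝ F) := hF.fderiv_right (by norm_num)
  have hF'd : Differentiable ℝ (fderiv ℝ F) := hF'c.differentiable (by norm_num)
  -- derivative of F along an affine line
  have hline : ∀ (a b c d t : ℝ),
      HasDerivAt (fun s => F (a * s + b, c * s + d))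
        (fderiv ℝ F (a * t + b, c * t + d) (a, c)) t := by
    intro a b c d t
    have h1 : HasDerivAt (fun s : ℝ => (a * s + b, c * s + d)) ((a : ℝ), (c : ℝ)) t := by
      have ha : HasDerivAt (fun s : ℝ => a * s + b) a t := by
        simpa using (((hasDerivAt_id t).const_mul a).add_const b)
      have hc : HasDerivAt (fun s : ℝ => c * s + d) c t := by
        simpa using (((hasDerivAt_id t).const_mul c).add_const d)
      exact ha.prodMk hc
    exact ((hFd _).hasFDerivAt).comp_hasDerivAt t h1
  -- derivative of (fderiv F applied to v) along an affine line
  have hline' : ∀ (v : ℝ × ℝ) (a b c d t : ℝ),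
      HasDerivAt (fun s => fderiv ℝ F (a * s + b, c * s + d) v)
        (fderiv ℝ (fderiv ℝ F) (a * t + b, c * t + d) (a, c) v) t := by
    intro v a b c d t
    have h1 : HasDerivAt (fun s : ℝ => (a * s + b, c * s + d)) ((a : ℝ), (c : ℝ)) t := by
      have ha : HasDerivAt (fun s : ℝ => a * s + b) a t := by
        simpa using (((hasDerivAt_id t).const_mul a).add_const b)
      have hc : HasDerivAt (fun s : ℝ => c * s + d) c t := by
        simpa using (((hasDerivAt_id t).const_mul c).add_const d)
      exact ha.prodMk hc
    have h2 : HasFDerivAt (fun p : ℝ × ℝ => fderiv ℝ F p v)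
        ((ContinuousLinearMap.apply ℝ ℝ v).comp
          (fderiv ℝ (fderiv ℝ F) (a * t + b, c * t + d))) (a * t + b, c * t + d) :=
      (ContinuousLinearMap.apply ℝ ℝ v).hasFDerivAt.comp _ ((hF'd _).hasFDerivAt)
    exact h2.comp_hasDerivAt t h1
  -- pt and px in terms of fderiv
  have hpt : ∀ t x, pt R t x = fderiv ℝ F (t, x) (1, 0) := by
    intro t x
    have h := hline 1 0 0 x t
    have h' : HasDerivAt (fun s => R s x) (fderiv ℝ F (t, x) (1, 0)) t := by
      simpa using h
    exact h'.deriv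
  have hpx : ∀ t x, px R t x = fderiv ℝ F (t, x) (0, 1) := by
    intro t x
    have h := hline 0 t 1 0 x
    have h' : HasDerivAt (fun y => R t y) (fderiv ℝ F (t, x) (0, 1)) x := by
      simpa using h
    exact h'.deriv
  -- second derivatives via hwave
  have hwave2 : ∀ p : ℝ × ℝ,
      fderiv ℝ (fderiv ℝ F) p (1, 0) (1, 0) = fderiv ℝ (fderiv ℝ F) p (0, 1) (0, 1) := by
    intro ⟨t, x⟩
    have h1 : pt (pt R) t x = fderiv ℝ (fderiv ℝ F) (t, x) (1, 0) (1, 0) := by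
      have heq : (fun s => pt R s x) = fun s => fderiv ℝ F (s, x) (1, 0) := by
        funext s; exact hpt s x
      have h := hline' (1, 0) 1 0 0 x t
      have h' : HasDerivAt (fun s => fderiv ℝ F (s, x) (1, 0))
          (fderiv ℝ (fderiv ℝ F) (t, x) (1, 0) (1, 0)) t := by simpa using h
      show deriv (fun s => pt R s x) t = _
      rw [heq]; exact h'.deriv
    have h2 : px (px R) t x = fderiv ℝ (fderiv ℝ F) (t, x) (0, 1) (0, 1) := by
      have heq : (fun y => px R t y) = fun y => fderiv ℝ F (t, y) (0, 1) := by
        funext y; exact hpx t y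
      have h := hline' (0, 1) 0 t 1 0 x
      have h' : HasDerivAt (fun y => fderiv ℝ F (t, y) (0, 1))
          (fderiv ℝ (fderiv ℝ F) (t, x) (0, 1) (0, 1)) x := by simpa using h
      show deriv (fun y => px R t y) x = _
      rw [heq]; exact h'.deriv
    rw [← h1, ← h2]; exact hwave t x
  have hsymm : ∀ (p : ℝ × ℝ) (v w : ℝ × ℝ),
      fderiv ℝ (fderiv ℝ F) p v w = fderiv ℝ (fderiv ℝ F) p w v := by
    intro p v w
    exact second_derivative_symmetric (fun y => (hFd y).hasFDerivAt) ((hF'd p).hasFDerivAt) v w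
  -- the key cancellation : D (1,-1) (1,1) = 0
  have hcancel : ∀ p : ℝ × ℝ,
      fderiv ℝ (fderiv ℝ F) p ((1 : ℝ), (-1 : ℝ)) ((1 : ℝ), (1 : ℝ)) = 0 := by
    intro p
    have e1 : ((1 : ℝ), (-1 : ℝ)) = ((1 : ℝ), (0 : ℝ)) - ((0 : ℝ), (1 : ℝ)) := by
      simp [Prod.ext_iff]
    have e2 : ((1 : ℝ), (1 : ℝ)) = ((1 : ℝ), (0 : ℝ)) + ((0 : ℝ), (1 : ℝ)) := by
      simp [Prod.ext_iff]
    rw [e1, e2]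
    simp only [map_sub, map_add, ContinuousLinearMap.sub_apply, ContinuousLinearMap.add_apply]
    have := hwave2 p
    have := hsymm p ((1 : ℝ), (0 : ℝ)) ((0 : ℝ), (1 : ℝ))
    linarith
  -- the function (∂t+∂x)R is constant along leftward characteristics
  have key : ∀ s : ℝ, fderiv ℝ F (s, x₀ - t₀ + s) ((1 : ℝ), (1 : ℝ))
      = fderiv ℝ F (0, x₀ - t₀ + 2 * s) ((1 : ℝ), (1 : ℝ)) := by
    intro s
    set c := x₀ - t₀ + 2 * s with hc
    set k : ℝ → ℝ := fun σ => fderiv ℝ F (σ, c - σ) ((1 : ℝ), (1 : ℝ)) with hk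
    have hdiff : ∀ σ : ℝ, HasDerivAt k
        (fderiv ℝ (fderiv ℝ F) (σ, c - σ) ((1 : ℝ), (-1 : ℝ)) ((1 : ℝ), (1 : ℝ))) σ := by
      intro σ
      have h := hline' ((1 : ℝ), (1 : ℝ)) 1 0 (-1) c σ
      have e : (fun σ : ℝ => fderiv ℝ F (1 * σ + 0, -1 * σ + c) ((1 : ℝ), (1 : ℝ))) = k := by
        funext σ; rw [hk]; ring_nf
      rw [e] at h
      have e2 : ((1 : ℝ) * σ + 0, (-1 : ℝ) * σ + c) = (σ, c - σ) := by
        simp [Prod.ext_iff]; ring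
      rw [e2] at h
      exact h
    have hconst : k s = k 0 := by
      have hkd : Differentiable ℝ k := fun σ => (hdiff σ).differentiableAt
      have hk0 : ∀ σ, deriv k σ = 0 := by
        intro σ; rw [(hdiff σ).deriv]; exact hcancel _
      exact is_const_of_deriv_eq_zero hkd hk0 s 0
    have e3 : c - s = x₀ - t₀ + s := by rw [hc]; ring
    have e4 : c - 0 = x₀ - t₀ + 2 * s := by rw [hc]; ring
    simpa [hk, e3, e4] using hconst
  -- continuity facts
  have hF'cont : Continuous (fderiv ℝ F) := hF'c.continuous
  have hlinecont : Continuous fun s : ℝ => ((0 : ℝ), x₀ - t₀ + 2 * s) :=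
    continuous_const.prodMk (continuous_const.add (continuous_const.mul continuous_id))
  have hcont0 : ∀ v : ℝ × ℝ, Continuous fun s : ℝ => fderiv ℝ F (0, x₀ - t₀ + 2 * s) v :=
    fun v => (hF'cont.comp hlinecont).clm_apply continuous_const
  have hcont1 : Continuous fun s : ℝ => fderiv ℝ F (0, x₀ - t₀ + 2 * s) ((1 : ℝ), (0 : ℝ)) :=
    hcont0 _
  have hcont2 : Continuous fun s : ℝ => fderiv ℝ F (0, x₀ - t₀ + 2 * s) ((0 : ℝ), (1 : ℝ)) :=
    hcont0 _
  -- FTC along the rightward characteristic through (t₀, x₀)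
  have hftc1 : ∫ s in (0 : ℝ)..t₀, fderiv ℝ F (0, x₀ - t₀ + 2 * s) ((1 : ℝ), (1 : ℝ))
      = F (t₀, x₀) - F (0, x₀ - t₀) := by
    have hg : ∀ s ∈ Set.uIcc (0 : ℝ) t₀, HasDerivAt (fun s => F (s, x₀ - t₀ + s))
        (fderiv ℝ F (0, x₀ - t₀ + 2 * s) ((1 : ℝ), (1 : ℝ))) s := by
      intro s _
      have h := hline 1 0 1 (x₀ - t₀) s
      have h' : HasDerivAt (fun s => F (s, x₀ - t₀ + s))
          (fderiv ℝ F (s, x₀ - t₀ + s) ((1 : ℝ), (1 : ℝ))) s := by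
        have e : (fun s : ℝ => F (1 * s + 0, 1 * s + (x₀ - t₀))) = fun s => F (s, x₀ - t₀ + s) := by
          funext s; ring_nf
        have e2 : ((1 : ℝ) * s + 0, (1 : ℝ) * s + (x₀ - t₀)) = (s, x₀ - t₀ + s) := by
          simp [Prod.ext_iff]; ring
        rw [e, e2] at h; exact h
      rw [← key s]; exact h'
    have hint : IntervalIntegrable
        (fun s => fderiv ℝ F (0, x₀ - t₀ + 2 * s) ((1 : ℝ), (1 : ℝ))) MeasureTheory.volume 0 t₀ := by
      exact (hcont0 _).intervalIntegrable _ _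
    have := intervalIntegral.integral_eq_sub_of_hasDerivAt hg hint
    simpa using this
  -- split the integrand
  have hsplit : ∀ s : ℝ, fderiv ℝ F (0, x₀ - t₀ + 2 * s) ((1 : ℝ), (1 : ℝ))
      = fderiv ℝ F (0, x₀ - t₀ + 2 * s) ((1 : ℝ), (0 : ℝ))
        + fderiv ℝ F (0, x₀ - t₀ + 2 * s) ((0 : ℝ), (1 : ℝ)) := by
    intro s
    rw [← map_add]
    norm_num
  -- FTC for the space-derivative part
  have hftc2 : ∫ s in (0 : ℝ)..t₀, fderiv ℝ F (0, x₀ - t₀ + 2 * s) ((0 : ℝ), (1 : ℝ))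
      = (F (0, x₀ + t₀) - F (0, x₀ - t₀)) / 2 := by
    have hg : ∀ s ∈ Set.uIcc (0 : ℝ) t₀, HasDerivAt (fun s => F (0, x₀ - t₀ + 2 * s) / 2)
        (fderiv ℝ F (0, x₀ - t₀ + 2 * s) ((0 : ℝ), (1 : ℝ))) s := by
      intro s _
      have h := hline 0 0 2 (x₀ - t₀) s
      have h' : HasDerivAt (fun s => F (0, x₀ - t₀ + 2 * s))
          (fderiv ℝ F (0, x₀ - t₀ + 2 * s) ((0 : ℝ), (2 : ℝ))) s := by
        have e : (fun s : ℝ => F (0 * s + 0, 2 * s + (x₀ - t₀))) = fun s => F (0, x₀ - t₀ + 2 * s) := by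
          funext s
          have : (0 : ℝ) * s + 0 = 0 := by ring
          rw [this]
          have : 2 * s + (x₀ - t₀) = x₀ - t₀ + 2 * s := by ring
          rw [this]
        have e2 : ((0 : ℝ) * s + 0, (2 : ℝ) * s + (x₀ - t₀)) = ((0 : ℝ), x₀ - t₀ + 2 * s) := by
          simp [Prod.ext_iff]; ring
        rw [e, e2] at h; exact h
      have h2 := h'.div_const 2
      have e3 : ((0 : ℝ), (2 : ℝ)) = (2 : ℝ) • ((0 : ℝ), (1 : ℝ)) := by
        simp [Prod.ext_iff]
      rw [e3, map_smul] at h2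
      simpa [smul_eq_mul] using h2
    have hint : IntervalIntegrable
        (fun s => fderiv ℝ F (0, x₀ - t₀ + 2 * s) ((0 : ℝ), (1 : ℝ))) MeasureTheory.volume 0 t₀ :=
      hcont2.intervalIntegrable _ _
    have := intervalIntegral.integral_eq_sub_of_hasDerivAt hg hint
    rw [this]
    have : x₀ - t₀ + 2 * t₀ = x₀ + t₀ := by ring
    rw [this]
    have : x₀ - t₀ + 2 * 0 = x₀ - t₀ := by ring
    rw [this]
    ring
  -- split the integral
  have hisplit : ∫ s in (0 : ℝ)..t₀, fderiv ℝ F (0, x₀ - t₀ + 2 * s) ((1 : ℝ), (1 : ℝ))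
      = (∫ s in (0 : ℝ)..t₀, fderiv ℝ F (0, x₀ - t₀ + 2 * s) ((1 : ℝ), (0 : ℝ)))
        + ∫ s in (0 : ℝ)..t₀, fderiv ℝ F (0, x₀ - t₀ + 2 * s) ((0 : ℝ), (1 : ℝ)) := by
    rw [← intervalIntegral.integral_add (hcont1.intervalIntegrable _ _)
      (hcont2.intervalIntegrable _ _)]
    exact intervalIntegral.integral_congr fun s _ => hsplit s
  -- lower bounds on the initial data
  have hB0 : 0 ≤ B := le_trans (abs_nonneg _) (hB 0)
  have hA0 : 0 ≤ A := le_trans (abs_nonneg _) (hA 0)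
  have hptRb : ∀ y : ℝ, pt Rb 0 y = 2 * R₀ * Real.cosh (2 * y) := by
    intro y
    subst hRb
    have h : HasDerivAt (fun t : ℝ => R₀ * Real.exp (2 * t) * Real.cosh (2 * y))
        (R₀ * (Real.exp (2 * 0) * (2 * 1)) * Real.cosh (2 * y)) 0 := by
      exact ((((hasDerivAt_id (0 : ℝ)).const_mul 2).exp).const_mul R₀).mul_const _
    have := h.deriv
    simp only [pt]
    rw [this]
    simp only [mul_zero, Real.exp_zero]
    ring
  have hptlow : ∀ y : ℝ, 2 * R₀ - B ≤ pt R 0 y := by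
    intro y
    have h1 := hB y
    have h2 := abs_le.mp h1
    have h3 : (1 : ℝ) ≤ Real.cosh (2 * y) := Real.one_le_cosh _
    have h4 := hptRb y
    nlinarith [h2.1]
  have hRlow : ∀ y : ℝ, R₀ - A ≤ R 0 y := by
    intro y
    have h1 := abs_le.mp (hA y)
    have h3 : (1 : ℝ) ≤ Real.cosh (2 * y) := Real.one_le_cosh _
    have h4 : Rb 0 y = R₀ * Real.cosh (2 * y) := by rw [hRb]; simp
    nlinarith [h1.1]
  -- the time-derivative part of the integral is nonnegative
  have hInonneg : 0 ≤ ∫ s in (0 : ℝ)..t₀, fderiv ℝ F (0, x₀ - t₀ + 2 * s) ((1 : ℝ), (0 : ℝ)) := by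
    apply intervalIntegral.integral_nonneg ht₀
    intro u _
    rw [← hpt]
    have := hptlow (x₀ - t₀ + 2 * u)
    nlinarith
  -- put everything together
  have hFval : R t₀ x₀ = F (t₀, x₀) := rfl
  have hF0 : ∀ y, F (0, y) = R 0 y := fun y => rfl
  have hb1 := hRlow (x₀ - t₀)
  have hb2 := hRlow (x₀ + t₀)
  rw [hFval]
  have := hftc1
  rw [hisplit, hftc2] at this
  rw [hF0] at *
  nlinarith
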